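/- Let R, L ⊆ {0, 1, …, n−1} and S₁ = {a^{2r} : r ∈ R} ∪ {a^{2l}b, a^{−2l}b² : l ∈ L} ⊆ U_{6n}. Set S_L = {a^{2l} : l ∈ L} and suppose S_L = S_L^{−1}. Then for every 0 ≤ k ≤ n−1: (1) ψ_k(S₁) = 2(∑_{r∈R} ω^{2kr} − ∑_{l∈L} ω^{2kl}); and (2) ψ_k(S₁²) = 2(∑_{r∈R} ω^{2kr} − ∑_{l∈L} ω^{2kl})². -/

import Mathlib

open Complex SemidirectProduct Polynomial
open scoped Pointwise

namespace U6nPaper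

/-- The inversion automorphism of `Multiplicative (ZMod 3)`. -/
def iota : MulAut (Multiplicative (ZMod 3)) :=
  { toFun := fun x => x⁻¹
    invFun := fun x => x⁻¹
    left_inv := fun x => inv_inv x
    right_inv := fun x => inv_inv x
    map_mul' := fun x y => mul_inv x y }

lemma iota_sq : iota ^ 2 = 1 := by
  ext x
  simp [sq, iota]

/-- The homomorphism `ZMod 2 → Aut(ZMod 3)` sending `1` to inversion. -/
def sgn2 : Multiplicative (ZMod 2) →* MulAut (Multiplicative (ZMod 3)) where
  toFun x := iota ^ (Multiplicative.toAdd x).val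
  map_one' := by simp
  map_mul' x y := by
    simp only [toAdd_mul, ZMod.val_add, ← pow_eq_pow_mod _ iota_sq, pow_add]

/-- The action of `ZMod (2n)` on `ZMod 3` where `r` acts by multiplication by `(-1)^r`. -/
def phi (n : ℕ) : Multiplicative (ZMod (2 * n)) →* MulAut (Multiplicative (ZMod 3)) :=
  sgn2.comp (AddMonoidHom.toMultiplicative
    ((ZMod.castHom ⟨n, rfl⟩ (ZMod 2)).toAddMonoidHom))

/-- The group `U_{6n} = ⟨a, b ∣ a^{2n} = b³ = 1, a⁻¹ba = b⁻¹⟩`, realized as the semidirect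
product `ZMod 3 ⋊ ZMod (2n)`. -/
abbrev U6n (n : ℕ) := Multiplicative (ZMod 3) ⋊[phi n] Multiplicative (ZMod (2 * n))

/-- The generator `a` of `U_{6n}` (of order `2n`). -/
def aU (n : ℕ) : U6n n := inr (Multiplicative.ofAdd (1 : ZMod (2 * n)))

/-- The generator `b` of `U_{6n}` (of order `3`). -/
def bU (n : ℕ) : U6n n := inl (Multiplicative.ofAdd (1 : ZMod 3))

def u6nEquiv (n : ℕ) : U6n n ≃ ZMod 3 × ZMod (2 * n) where
  toFun g := (Multiplicative.toAdd g.left, Multiplicative.toAdd g.right)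
  invFun p := ⟨Multiplicative.ofAdd p.1, Multiplicative.ofAdd p.2⟩
  left_inv g := rfl
  right_inv p := rfl

instance (n : ℕ) [NeZero n] : Fintype (U6n n) :=
  haveI : NeZero (2 * n) := ⟨by have := NeZero.ne n; omega⟩
  Fintype.ofEquiv _ (u6nEquiv n).symm

/-- An element `a^r b^t` of `U_{6n}` (with `0 ≤ r < 2n`) is even if `r` is even. -/
def IsEvenElt {n : ℕ} (g : U6n n) : Prop := Even (Multiplicative.toAdd g.right).val

/-- The Cayley graph of a group `G` with connection set `S`: `g` and `h` are adjacent
iff `h * g⁻¹ ∈ S` (as a simple graph; for `1 ∉ S = S⁻¹` this is the usual notion). -/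
def cayleyGraph {G : Type*} [Group G] (S : Set G) : SimpleGraph G :=
  SimpleGraph.fromRel (fun g h => h * g⁻¹ ∈ S)

open scoped Classical in
/-- The adjacency matrix of a simple graph, over `ℂ`. -/
noncomputable def adjMat {V : Type*} (Γ : SimpleGraph V) : Matrix V V ℂ :=
  fun g h => if Γ.Adj g h then 1 else 0

/-- A simple graph is integral if every eigenvalue of its adjacency matrix is an integer. -/
def IsIntegral {V : Type*} [Fintype V] [DecidableEq V] (Γ : SimpleGraph V) : Prop :=
  ∀ z ∈ spectrum ℂ (adjMat Γ), ∃ m : ℤ, z = (m : ℂ)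

/-- The root of unity `ω = exp(πi/n)`. -/
noncomputable def om (n : ℕ) : ℂ := Complex.exp (Real.pi * Complex.I / n)

/-- The linear character `χ_j` of `U_{6n}`: `χ_j(a^r b^t) = ω^{jr}`. -/
noncomputable def chi (n j : ℕ) (g : U6n n) : ℂ :=
  om n ^ (j * (Multiplicative.toAdd g.right).val)

/-- The degree-two character `ψ_k` of `U_{6n}`: `ψ_k(a^r b^t)` equals `2ω^{kr}` if `r` is even
and `t = 0`, `-ω^{kr}` if `r` is even and `t ∈ {1,2}`, and `0` if `r` is odd. -/
noncomputable def psi (n k : ℕ) (g : U6n n) : ℂ :=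
  if Even (Multiplicative.toAdd g.right).val then
    (if g.left = 1 then 2 else -1) * om n ^ (k * (Multiplicative.toAdd g.right).val)
  else 0

/-- `f(A) = ∑_{s ∈ A} f(s)`. -/
noncomputable def fsum {α : Type*} (f : α → ℂ) (A : Finset α) : ℂ := ∑ s ∈ A, f s

/-- `f(A²) = ∑_{s,t ∈ A} f(s·t)`. -/
noncomputable def fsum2 {α : Type*} [Mul α] (f : α → ℂ) (A : Finset α) : ℂ :=
  ∑ s ∈ A, ∑ t ∈ A, f (s * t)

/-- The Boolean algebra `B(H)` of a group `H`: the smallest family of subsets of `H`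
containing all subgroups and closed under complements, unions and intersections.
`InBoolAlg H s` says `s ∈ B(H)`. -/
inductive InBoolAlg (H : Type*) [Group H] : Set H → Prop where
  | subgroup (K : Subgroup H) : InBoolAlg H (K : Set H)
  | compl {s : Set H} : InBoolAlg H s → InBoolAlg H sᶜ
  | union {s t : Set H} : InBoolAlg H s → InBoolAlg H t → InBoolAlg H (s ∪ t)
  | inter {s t : Set H} : InBoolAlg H s → InBoolAlg H t → InBoolAlg H (s ∩ t)

set_option linter.unusedSectionVars false

section Helpers
variable (n : ℕ) [NeZero n]

def elt (β : ZMod 3) (α : ZMod (2 * n)) : U6n n :=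
  ⟨Multiplicative.ofAdd β, Multiplicative.ofAdd α⟩

lemma phi_eq_one (α : ZMod (2 * n)) (h : ((ZMod.castHom ⟨n, rfl⟩ (ZMod 2)) α) = 0) :
    phi n (Multiplicative.ofAdd α) = 1 := by
  simp [phi, sgn2, h]

lemma elt_mul (β1 β2 : ZMod 3) (α1 α2 : ZMod (2 * n))
    (h : ((ZMod.castHom ⟨n, rfl⟩ (ZMod 2)) α1) = 0) :
    elt n β1 α1 * elt n β2 α2 = elt n (β1 + β2) (α1 + α2) := by
  show SemidirectProduct.mk _ _ * SemidirectProduct.mk _ _ = _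
  unfold elt
  ext
  · show Multiplicative.ofAdd β1 * (phi n (Multiplicative.ofAdd α1)) (Multiplicative.ofAdd β2) = _
    rw [phi_eq_one n α1 h]
    simp [← ofAdd_add]
    rfl
  · simp [← ofAdd_add]

lemma elt_inj {β1 β2 : ZMod 3} {α1 α2 : ZMod (2 * n)} (h : elt n β1 α1 = elt n β2 α2) :
    β1 = β2 ∧ α1 = α2 := by
  unfold elt at h
  have h1 := congrArg SemidirectProduct.left h
  have h2 := congrArg SemidirectProduct.right h
  exact ⟨by simpa using congrArg Multiplicative.toAdd h1,
    by simpa using congrArg Multiplicative.toAdd h2⟩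

lemma aU_pow (m : ℕ) : aU n ^ m = elt n 0 (m : ZMod (2 * n)) := by
  rw [aU, ← map_pow]
  unfold elt
  simp [← ofAdd_nsmul]

lemma aU_pow_inv (m : ℕ) : (aU n ^ m)⁻¹ = elt n 0 (-(m : ZMod (2 * n))) := by
  rw [aU, ← map_pow, ← map_inv]
  unfold elt
  simp [← ofAdd_nsmul, ← ofAdd_neg]

lemma castHom_two_mul (m : ℕ) :
    (ZMod.castHom ⟨n, rfl⟩ (ZMod 2)) ((2 * m : ℕ) : ZMod (2 * n)) = 0 := by
  rw [map_natCast]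
  push_cast
  rw [show ((2 : ZMod 2)) = 0 from rfl]
  ring

lemma eA_eq (r : ℕ) : aU n ^ (2 * r) = elt n 0 ((2 * r : ℕ) : ZMod (2 * n)) := aU_pow n _

lemma eB_eq (l : ℕ) : aU n ^ (2 * l) * bU n = elt n 1 ((2 * l : ℕ) : ZMod (2 * n)) := by
  rw [aU_pow, bU]
  have h1 : (inl (Multiplicative.ofAdd (1 : ZMod 3)) : U6n n) = elt n 1 0 := rfl
  rw [h1, elt_mul n _ _ _ _ (castHom_two_mul n l)]
  simp

lemma eC_eq (l : ℕ) : (aU n ^ (2 * l))⁻¹ * bU n ^ 2 = elt n 2 (-((2 * l : ℕ) : ZMod (2 * n))) := by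
  rw [aU_pow_inv, bU]
  have h1 : (inl (Multiplicative.ofAdd (1 : ZMod 3)) : U6n n) ^ 2 = elt n 2 0 := by
    rw [← map_pow]; rfl
  rw [h1, elt_mul n _ _ _ _ (by rw [map_neg, castHom_two_mul n l, neg_zero])]
  simp

instance : NeZero (2 * n) := ⟨by have := NeZero.ne n; omega⟩

lemma om_pow_two_mul : om n ^ (2 * n) = 1 := by
  have hn : (n : ℂ) ≠ 0 := Nat.cast_ne_zero.mpr (NeZero.ne n)
  rw [om, ← Complex.exp_nat_mul]
  rw [show ((2 * n : ℕ) : ℂ) * (Real.pi * Complex.I / n) = 2 * Real.pi * Complex.I by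
    push_cast; field_simp]
  exact Complex.exp_two_pi_mul_I

lemma om_pow_mod (a : ℕ) : om n ^ (a % (2 * n)) = om n ^ a := by
  conv_rhs => rw [← Nat.div_add_mod a (2 * n), pow_add, pow_mul, om_pow_two_mul, one_pow, one_mul]

noncomputable def ch (k : ℕ) (x : ZMod (2 * n)) : ℂ := om n ^ (k * x.val)

variable (k : ℕ)

lemma ch_add (x y : ZMod (2 * n)) : ch n k (x + y) = ch n k x * ch n k y := by
  unfold ch
  rw [← pow_add, ← mul_add]
  rw [← om_pow_mod n (k * (x + y).val), ← om_pow_mod n (k * (x.val + y.val))]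
  have h : (x + y).val % (2 * n) = (x.val + y.val) % (2 * n) := by
    rw [ZMod.val_add, Nat.mod_mod_of_dvd _ dvd_rfl]
  exact congrArg (om n ^ ·) (Nat.ModEq.mul_left k h)

lemma ch_natCast (m : ℕ) (hm : m < 2 * n) : ch n k ((m : ZMod (2 * n))) = om n ^ (k * m) := by
  unfold ch
  rw [ZMod.val_natCast, Nat.mod_eq_of_lt hm]

lemma even_val_iff (x : ZMod (2 * n)) :
    Even x.val ↔ (ZMod.castHom ⟨n, rfl⟩ (ZMod 2)) x = 0 := by
  rw [ZMod.castHom_apply, ← ZMod.natCast_val,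
    ZMod.natCast_eq_zero_iff, even_iff_two_dvd]

lemma psi_elt (β : ZMod 3) (α : ZMod (2 * n)) (h : Even α.val) :
    psi n k (elt n β α) = (if β = 0 then 2 else -1) * ch n k α := by
  unfold psi elt ch
  simp only [toAdd_ofAdd, if_pos h, ofAdd_eq_one]

lemma psi_elt_mul (β1 β2 : ZMod 3) (α1 α2 : ZMod (2 * n))
    (h1 : Even α1.val) (h2 : Even α2.val) :
    psi n k (elt n β1 α1 * elt n β2 α2) =
      (if β1 + β2 = 0 then 2 else -1) * (ch n k α1 * ch n k α2) := by
  rw [elt_mul n _ _ _ _ ((even_val_iff n α1).mp h1)]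
  rw [psi_elt n k _ _ (by
    rw [even_val_iff, map_add, (even_val_iff n α1).mp h1, (even_val_iff n α2).mp h2, add_zero])]
  rw [ch_add]

lemma double_sum_eq (A B : Finset ℕ) (g1 g2 : ℕ → U6n n) (β1 β2 : ZMod 3)
    (α1 α2 : ℕ → ZMod (2 * n))
    (h1inj : ∀ x ∈ A, ∀ y ∈ A, g1 x = g1 y → x = y)
    (h2inj : ∀ x ∈ B, ∀ y ∈ B, g2 x = g2 y → x = y)
    (hg1 : ∀ a ∈ A, g1 a = elt n β1 (α1 a)) (hg2 : ∀ b ∈ B, g2 b = elt n β2 (α2 b))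
    (he1 : ∀ a ∈ A, Even (α1 a).val) (he2 : ∀ b ∈ B, Even (α2 b).val) :
    ∑ s ∈ A.image g1, ∑ t ∈ B.image g2, psi n k (s * t)
      = (if β1 + β2 = 0 then 2 else -1) *
        ((∑ a ∈ A, ch n k (α1 a)) * (∑ b ∈ B, ch n k (α2 b))) := by
  rw [Finset.sum_image h1inj]
  rw [Finset.sum_congr rfl (fun a ha => Finset.sum_image h2inj)]
  rw [Finset.sum_congr rfl (fun a ha => Finset.sum_congr rfl (fun b hb => by
    rw [hg1 a ha, hg2 b hb, psi_elt_mul n k _ _ _ _ (he1 a ha) (he2 b hb)]))]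
  rw [Finset.sum_mul_sum, Finset.mul_sum]
  exact Finset.sum_congr rfl fun a _ => by
    rw [Finset.mul_sum]


end Helpers

/-- Equations (4) and (6): for `S₁ = {a^{2r} : r ∈ R} ∪ {a^{2l}b, a^{-2l}b² : l ∈ L}` with
`S_L = S_L⁻¹`, one has `ψ_k(S₁) = 2(ρ_k(S_R) - ρ_k(S_L))` and
`ψ_k(S₁²) = 2(ρ_k(S_R) - ρ_k(S_L))²` for all `0 ≤ k ≤ n-1`. -/
theorem psi_sum_eqs (n : ℕ) [NeZero n] (R L : Finset ℕ)
    (hR : R ⊆ Finset.range n) (hL : L ⊆ Finset.range n) (S₁ : Finset (U6n n))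
    (hS₁ : S₁ = R.image (fun r => aU n ^ (2 * r)) ∪
      (L.image (fun l => aU n ^ (2 * l) * bU n) ∪
       L.image (fun l => (aU n ^ (2 * l))⁻¹ * bU n ^ 2)))
    (hSL : (L.image (fun l => aU n ^ (2 * l)))⁻¹ = L.image (fun l => aU n ^ (2 * l)))
    (k : ℕ) (hk : k ≤ n - 1) :
    fsum (psi n k) S₁ = 2 * (∑ r ∈ R, om n ^ (2 * k * r) - ∑ l ∈ L, om n ^ (2 * k * l)) ∧
    fsum2 (psi n k) S₁ =
      2 * (∑ r ∈ R, om n ^ (2 * k * r) - ∑ l ∈ L, om n ^ (2 * k * l)) ^ 2 := by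
  classical
  -- even-ness facts
  have hevP : ∀ m : ℕ, Even (((2 * m : ℕ) : ZMod (2 * n))).val :=
    fun m => (even_val_iff n _).mpr (castHom_two_mul n m)
  have hevN : ∀ m : ℕ, Even ((-((2 * m : ℕ) : ZMod (2 * n))).val) :=
    fun m => (even_val_iff n _).mpr (by rw [map_neg, castHom_two_mul, neg_zero])
  -- injectivity of casts
  have hcast : ∀ {r1 r2 : ℕ}, r1 < n → r2 < n →
      ((2 * r1 : ℕ) : ZMod (2 * n)) = ((2 * r2 : ℕ) : ZMod (2 * n)) → r1 = r2 := by
    intro r1 r2 h1 h2 h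
    have := congrArg ZMod.val h
    rw [ZMod.val_natCast, ZMod.val_natCast, Nat.mod_eq_of_lt (by omega),
      Nat.mod_eq_of_lt (by omega)] at this
    omega
  have hAinj : ∀ x ∈ R, ∀ y ∈ R, aU n ^ (2 * x) = aU n ^ (2 * y) → x = y := by
    intro x hx y hy h
    rw [eA_eq, eA_eq] at h
    exact hcast (Finset.mem_range.mp (hR hx)) (Finset.mem_range.mp (hR hy)) (elt_inj n h).2
  have hLA : ∀ x ∈ L, ∀ y ∈ L, aU n ^ (2 * x) = aU n ^ (2 * y) → x = y := by
    intro x hx y hy h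
    rw [eA_eq, eA_eq] at h
    exact hcast (Finset.mem_range.mp (hL hx)) (Finset.mem_range.mp (hL hy)) (elt_inj n h).2
  have hBinj : ∀ x ∈ L, ∀ y ∈ L,
      aU n ^ (2 * x) * bU n = aU n ^ (2 * y) * bU n → x = y := by
    intro x hx y hy h
    rw [eB_eq, eB_eq] at h
    exact hcast (Finset.mem_range.mp (hL hx)) (Finset.mem_range.mp (hL hy)) (elt_inj n h).2
  have hCinj : ∀ x ∈ L, ∀ y ∈ L,
      (aU n ^ (2 * x))⁻¹ * bU n ^ 2 = (aU n ^ (2 * y))⁻¹ * bU n ^ 2 → x = y := by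
    intro x hx y hy h
    rw [eC_eq, eC_eq] at h
    exact hcast (Finset.mem_range.mp (hL hx)) (Finset.mem_range.mp (hL hy))
      (neg_inj.mp (elt_inj n h).2)
  -- disjointness
  have hdBC : Disjoint (L.image (fun l => aU n ^ (2 * l) * bU n))
      (L.image (fun l => (aU n ^ (2 * l))⁻¹ * bU n ^ 2)) := by
    rw [Finset.disjoint_left]
    rintro g hg1 hg2
    obtain ⟨x, hx, rfl⟩ := Finset.mem_image.mp hg1
    obtain ⟨y, hy, hxy⟩ := Finset.mem_image.mp hg2
    rw [eB_eq, eC_eq] at hxy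
    exact absurd (elt_inj n hxy).1 (by decide)
  have hdA : Disjoint (R.image (fun r => aU n ^ (2 * r)))
      ((L.image (fun l => aU n ^ (2 * l) * bU n)) ∪
       (L.image (fun l => (aU n ^ (2 * l))⁻¹ * bU n ^ 2))) := by
    rw [Finset.disjoint_left]
    rintro g hg1 hg2
    obtain ⟨x, hx, rfl⟩ := Finset.mem_image.mp hg1
    rcases Finset.mem_union.mp hg2 with hg2 | hg2 <;>
      obtain ⟨y, hy, hxy⟩ := Finset.mem_image.mp hg2
    · rw [eB_eq n y, eA_eq n x] at hxy
      exact absurd (elt_inj n hxy).1 (by decide)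
    · rw [eC_eq n y, eA_eq n x] at hxy
      exact absurd (elt_inj n hxy).1 (by decide)
  -- values of ch
  have hchR : ∀ r ∈ R, ch n k ((2 * r : ℕ) : ZMod (2 * n)) = om n ^ (2 * k * r) := by
    intro r hr
    rw [ch_natCast n k _ (by have := Finset.mem_range.mp (hR hr); omega),
      show k * (2 * r) = 2 * k * r by ring]
  have hchL : ∀ l ∈ L, ch n k ((2 * l : ℕ) : ZMod (2 * n)) = om n ^ (2 * k * l) := by
    intro l hl
    rw [ch_natCast n k _ (by have := Finset.mem_range.mp (hL hl); omega),
      show k * (2 * l) = 2 * k * l by ring]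
  -- Z = Y via hSL
  have hZ : ∑ l ∈ L, ch n k (-((2 * l : ℕ) : ZMod (2 * n))) = ∑ l ∈ L, om n ^ (2 * k * l) := by
    have hinvinj : ∀ x ∈ L, ∀ y ∈ L,
        (aU n ^ (2 * x))⁻¹ = (aU n ^ (2 * y))⁻¹ → x = y :=
      fun x hx y hy h => hLA x hx y hy (inv_injective h)
    have himg : (L.image (fun l => aU n ^ (2 * l)))⁻¹
        = L.image (fun l => (aU n ^ (2 * l))⁻¹) := by
      rw [Finset.inv_def, Finset.image_image]
      rfl
    have key := congrArg (fun s : Finset (U6n n) =>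
      ∑ g ∈ s, ch n k (Multiplicative.toAdd g.right)) hSL
    simp only [himg] at key
    rw [Finset.sum_image hinvinj, Finset.sum_image hLA] at key
    calc ∑ l ∈ L, ch n k (-((2 * l : ℕ) : ZMod (2 * n)))
        = ∑ l ∈ L, ch n k (Multiplicative.toAdd ((aU n ^ (2 * l))⁻¹).right) := by
          refine Finset.sum_congr rfl fun l _ => ?_
          rw [aU_pow_inv]
          rfl
      _ = ∑ l ∈ L, ch n k (Multiplicative.toAdd ((aU n ^ (2 * l))).right) := key
      _ = ∑ l ∈ L, om n ^ (2 * k * l) := by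
          refine Finset.sum_congr rfl fun l hl => ?_
          rw [show (aU n ^ (2 * l)) = elt n 0 ((2 * l : ℕ) : ZMod (2 * n)) from eA_eq n l]
          exact hchL l hl
  constructor
  · rw [hS₁, fsum, Finset.sum_union hdA, Finset.sum_union hdBC,
      Finset.sum_image hAinj, Finset.sum_image hBinj, Finset.sum_image hCinj]
    have e1 : ∀ r ∈ R, psi n k (aU n ^ (2 * r)) = 2 * om n ^ (2 * k * r) := by
      intro r hr
      rw [eA_eq, psi_elt n k _ _ (hevP r), if_pos rfl, hchR r hr]
    have e2 : ∀ l ∈ L, psi n k (aU n ^ (2 * l) * bU n) = -om n ^ (2 * k * l) := by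
      intro l hl
      rw [eB_eq, psi_elt n k _ _ (hevP l), if_neg (by decide), hchL l hl, neg_one_mul]
    have e3 : ∀ l ∈ L, psi n k ((aU n ^ (2 * l))⁻¹ * bU n ^ 2)
        = -(ch n k (-((2 * l : ℕ) : ZMod (2 * n)))) := by
      intro l hl
      rw [eC_eq, psi_elt n k _ _ (hevN l), if_neg (by decide), neg_one_mul]
    rw [Finset.sum_congr rfl e1, Finset.sum_congr rfl e2, Finset.sum_congr rfl e3]
    simp only [Finset.sum_neg_distrib]
    rw [hZ, ← Finset.mul_sum]
    ring
  · rw [hS₁, fsum2]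
    simp only [Finset.sum_union hdA, Finset.sum_union hdBC, Finset.sum_add_distrib]
    rw [double_sum_eq n k R R _ _ 0 0 _ _ hAinj hAinj
        (fun a _ => eA_eq n a) (fun b _ => eA_eq n b) (fun a _ => hevP a) (fun b _ => hevP b),
      double_sum_eq n k R L _ _ 0 1 _ _ hAinj hBinj
        (fun a _ => eA_eq n a) (fun b _ => eB_eq n b) (fun a _ => hevP a) (fun b _ => hevP b),
      double_sum_eq n k R L _ _ 0 2 _ _ hAinj hCinj
        (fun a _ => eA_eq n a) (fun b _ => eC_eq n b) (fun a _ => hevP a) (fun b _ => hevN b),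
      double_sum_eq n k L R _ _ 1 0 _ _ hBinj hAinj
        (fun a _ => eB_eq n a) (fun b _ => eA_eq n b) (fun a _ => hevP a) (fun b _ => hevP b),
      double_sum_eq n k L L _ _ 1 1 _ _ hBinj hBinj
        (fun a _ => eB_eq n a) (fun b _ => eB_eq n b) (fun a _ => hevP a) (fun b _ => hevP b),
      double_sum_eq n k L L _ _ 1 2 _ _ hBinj hCinj
        (fun a _ => eB_eq n a) (fun b _ => eC_eq n b) (fun a _ => hevP a) (fun b _ => hevN b),
      double_sum_eq n k L R _ _ 2 0 _ _ hCinj hAinj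
        (fun a _ => eC_eq n a) (fun b _ => eA_eq n b) (fun a _ => hevN a) (fun b _ => hevP b),
      double_sum_eq n k L L _ _ 2 1 _ _ hCinj hBinj
        (fun a _ => eC_eq n a) (fun b _ => eB_eq n b) (fun a _ => hevN a) (fun b _ => hevP b),
      double_sum_eq n k L L _ _ 2 2 _ _ hCinj hCinj
        (fun a _ => eC_eq n a) (fun b _ => eC_eq n b) (fun a _ => hevN a) (fun b _ => hevN b)]
    rw [Finset.sum_congr rfl hchR, Finset.sum_congr rfl hchL, hZ]
    simp only [show ((0:ZMod 3) + 0 = 0) = True from by decide,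
      show ((0:ZMod 3) + 1 = 0) = False from by decide,
      show ((0:ZMod 3) + 2 = 0) = False from by decide,
      show ((1:ZMod 3) + 0 = 0) = False from by decide,
      show ((1:ZMod 3) + 1 = 0) = False from by decide,
      show ((1:ZMod 3) + 2 = 0) = True from by decide,
      show ((2:ZMod 3) + 0 = 0) = False from by decide,
      show ((2:ZMod 3) + 1 = 0) = True from by decide,
      show ((2:ZMod 3) + 2 = 0) = False from by decide,
      if_true, if_false]
    ring


end U6nPaper
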